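/- arXiv:1707.02496 — 3 statements merged into one kernel-verified Lean document; each statement's English description precedes it below -/
import Mathlib

section
/- Every Ho–Lee forward curve started from a Nelson–Siegel curve is a linearly extended Nelson–Siegel curve: let z₁, z₂, z₃ ∈ ℝ, λ > 0, σ ∈ ℝ, r ∈ ℝ, t ≥ 0, and let f_HL(t,τ) = r + σ²·t·τ + (z₂ + z₃(t+τ))·exp(−λ(t+τ)) − (z₂ + z₃t)·exp(−λt) for τ ≥ 0. Then there exist β₀, β₁, β₂, β₃ ∈ ℝ such that for all τ ≥ 0, f_HL(t,τ) = β₀·τ + β₁ + β₂·exp(−λτ) + β₃·τ·exp(−λτ). -/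
/-- The Ho–Lee forward curve started from a Nelson–Siegel curve is a linearly
extended Nelson–Siegel curve. -/
theorem hoLee_forward_is_linearly_extended_NS (z₁ z₂ z₃ lam σ r t : ℝ)
    (hlam : 0 < lam) (ht : 0 ≤ t) (fHL : ℝ → ℝ → ℝ)
    (hf : ∀ τ, fHL t τ = r + σ ^ 2 * t * τ
        + (z₂ + z₃ * (t + τ)) * Real.exp (-lam * (t + τ))
        - (z₂ + z₃ * t) * Real.exp (-lam * t)) :
    ∃ β₀ β₁ β₂ β₃ : ℝ, ∀ τ ≥ (0 : ℝ),
      fHL t τ = β₀ * τ + β₁ + β₂ * Real.exp (-lam * τ)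
        + β₃ * τ * Real.exp (-lam * τ) := by
  refine ⟨σ ^ 2 * t, r - (z₂ + z₃ * t) * Real.exp (-lam * t),
    (z₂ + z₃ * t) * Real.exp (-lam * t), z₃ * Real.exp (-lam * t), ?_⟩
  intro τ _
  rw [hf τ, show -lam * (t + τ) = -lam * t + -lam * τ by ring, Real.exp_add]
  ring
end

section
/- Every Hull–White forward curve started from a Nelson–Siegel curve is an exponentially extended Nelson–Siegel curve: let z₁, z₂, z₃ ∈ ℝ, λ > 0, a > 0, σ ∈ ℝ, r ∈ ℝ, t ≥ 0, let f*(τ) = z₁ + z₂·exp(−λτ) + z₃·τ·exp(−λτ), α(t) = f*(t) + (σ²/(2a²))·(1 − exp(−at))², and let f_HW(t,τ) = −(σ²/(2a²))·(1 − exp(−aτ))² + f*(t+τ) + (σ²/(2a²))·(1 − exp(−a(t+τ)))² − α(t)·exp(−aτ) + r·exp(−aτ) for τ ≥ 0. Then there exist β₁, β₂, β₃, β₄, β₅ ∈ ℝ such that for all τ ≥ 0, f_HW(t,τ) = β₁·exp(−aτ) + β₂·exp(−2aτ) + β₃ + β₄·exp(−λτ) + β₅·τ·exp(−λτ). -/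
/-- The Hull–White forward curve started from a Nelson–Siegel curve is an
exponentially extended Nelson–Siegel curve. -/
theorem hullWhite_forward_is_exponentially_extended_NS (z₁ z₂ z₃ lam a σ r t : ℝ)
    (hlam : 0 < lam) (ha : 0 < a) (ht : 0 ≤ t)
    (fstar : ℝ → ℝ)
    (hfstar : ∀ τ, fstar τ = z₁ + z₂ * Real.exp (-lam * τ) + z₃ * τ * Real.exp (-lam * τ))
    (α : ℝ → ℝ)
    (hα : ∀ u, α u = fstar u + σ ^ 2 / (2 * a ^ 2) * (1 - Real.exp (-a * u)) ^ 2)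
    (fHW : ℝ → ℝ → ℝ)
    (hf : ∀ τ, fHW t τ =
        -(σ ^ 2 / (2 * a ^ 2)) * (1 - Real.exp (-a * τ)) ^ 2
        + fstar (t + τ) + σ ^ 2 / (2 * a ^ 2) * (1 - Real.exp (-a * (t + τ))) ^ 2
        - α t * Real.exp (-a * τ) + r * Real.exp (-a * τ)) :
    ∃ β₁ β₂ β₃ β₄ β₅ : ℝ, ∀ τ ≥ (0 : ℝ),
      fHW t τ = β₁ * Real.exp (-a * τ) + β₂ * Real.exp (-(2 * a) * τ) + β₃
        + β₄ * Real.exp (-lam * τ) + β₅ * τ * Real.exp (-lam * τ) := by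
  set c := σ ^ 2 / (2 * a ^ 2) with hc
  refine ⟨2 * c * (1 - Real.exp (-a * t)) - α t + r,
      c * (Real.exp (-a * t) ^ 2 - 1), z₁,
      (z₂ + z₃ * t) * Real.exp (-lam * t), z₃ * Real.exp (-lam * t), ?_⟩
  intro τ hτ
  rw [hf, hfstar]
  have h1 : Real.exp (-a * (t + τ)) = Real.exp (-a * t) * Real.exp (-a * τ) := by
    rw [← Real.exp_add]; ring_nf
  have h2 : Real.exp (-lam * (t + τ)) = Real.exp (-lam * t) * Real.exp (-lam * τ) := by
    rw [← Real.exp_add]; ring_nf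
  have h3 : Real.exp (-(2 * a) * τ) = Real.exp (-a * τ) * Real.exp (-a * τ) := by
    rw [← Real.exp_add]; ring_nf
  rw [h1, h2, h3]
  ring
end

section
/- (Consistency of the Hull–White model with the manifold 𝒢^λ of exponentially extended Nelson–Siegel curves.) Fix a > 0, λ > 0, σ ∈ ℝ. For every β = (β₁,β₂,β₃,β₄,β₅) ∈ ℝ⁵: (i) [drift condition] there exist A, B, C, D, E ∈ ℝ such that for all τ ≥ 0, −a·β₁·exp(−aτ) − 2a·β₂·exp(−2aτ) + (β₅ − β₄λ)·exp(−λτ) − β₅·λ·τ·exp(−λτ) + (σ²/a)·exp(−aτ)·(1 − exp(−aτ)) = A·exp(−aτ) + B·exp(−2aτ) + C + D·exp(−λτ) + E·τ·exp(−λτ); and (ii) [volatility condition] there exist A, B, C, D, E ∈ ℝ such that for all τ ≥ 0, σ·exp(−aτ) = A·exp(−aτ) + B·exp(−2aτ) + C + D·exp(−λτ) + E·τ·exp(−λτ). Equivalently, the function ∂G^λ/∂τ(·;β) + (σ²/a)·exp(−a·)·(1 − exp(−a·)) and the function σ·exp(−a·) both lie in the real span of the functions exp(−aτ), exp(−2aτ),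 1, exp(−λτ), τ·exp(−λτ) on [0,∞). -/
/-- Björk–Christensen consistency of the Hull–White model with the manifold of
exponentially extended Nelson–Siegel curves: drift and volatility conditions. -/
theorem hullWhite_consistency (a lam σ : ℝ) (ha : 0 < a) (hlam : 0 < lam) :
    ∀ β₁ β₂ β₃ β₄ β₅ : ℝ,
      (∃ A B C D E : ℝ, ∀ τ ≥ (0 : ℝ),
        -a * β₁ * Real.exp (-a * τ) - 2 * a * β₂ * Real.exp (-(2 * a) * τ)
            + (β₅ - β₄ * lam) * Real.exp (-lam * τ) - β₅ * lam * τ * Real.exp (-lam * τ)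
            + σ ^ 2 / a * Real.exp (-a * τ) * (1 - Real.exp (-a * τ))
          = A * Real.exp (-a * τ) + B * Real.exp (-(2 * a) * τ) + C
            + D * Real.exp (-lam * τ) + E * τ * Real.exp (-lam * τ)) ∧
      (∃ A B C D E : ℝ, ∀ τ ≥ (0 : ℝ),
        σ * Real.exp (-a * τ)
          = A * Real.exp (-a * τ) + B * Real.exp (-(2 * a) * τ) + C
            + D * Real.exp (-lam * τ) + E * τ * Real.exp (-lam * τ)) := by
  intro β₁ β₂ β₃ β₄ β₅
  constructor
  · refine ⟨-a * β₁ + σ ^ 2 / a, -2 * a * β₂ - σ ^ 2 / a, 0, β₅ - β₄ * lam, -(β₅ * lam), ?_⟩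
    intro τ _
    have h2 : Real.exp (-(2 * a) * τ) = Real.exp (-a * τ) * Real.exp (-a * τ) := by
      rw [← Real.exp_add]; ring_nf
    rw [h2]; ring
  · exact ⟨σ, 0, 0, 0, 0, fun τ _ => by ring⟩
end
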